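/- Let 𝔨 be the Lie algebra of a compact Lie group (i.e., a real Lie algebra admitting an invariant inner product) and τ an involutive Lie algebra automorphism of 𝔨. Then there exists a maximal abelian subalgebra 𝔱 ⊆ 𝔨 that is τ-stable, i.e., τ(𝔱) = 𝔱. -/

import Mathlib

/-- In any real Lie algebra, and any submodule `M`, there is a submodule `A ≤ M` whose
elements pairwise commute, and which is maximal in the sense that any element of `M`
commuting with all of `A` lies in `A`. -/
lemma exists_max_comm {𝔨 : Type*} [LieRing 𝔨] [LieAlgebra ℝ 𝔨] (M : Submodule ℝ 𝔨) :
    ∃ A : Submodule ℝ 𝔨, A ≤ M ∧ (∀ x ∈ A, ∀ y ∈ A, ⁅x, y⁆ = (0 : 𝔨)) ∧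
      ∀ x ∈ M, (∀ a ∈ A, ⁅x, a⁆ = (0 : 𝔨)) → x ∈ A := by
  set s : Set (Submodule ℝ 𝔨) :=
    {N | N ≤ M ∧ ∀ x ∈ N, ∀ y ∈ N, ⁅x, y⁆ = (0 : 𝔨)} with hs
  obtain ⟨A, hAmax⟩ : ∃ A, Maximal (· ∈ s) A := by
    apply zorn_le₀
    intro c hcs hchain
    rcases c.eq_empty_or_nonempty with rfl | hne
    · refine ⟨⊥, ⟨bot_le, ?_⟩, by simp⟩
      intro x hx; simp only [Submodule.mem_bot] at hx; subst hx; simp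
    · refine ⟨sSup c, ⟨?_, ?_⟩, fun z hz => le_sSup hz⟩
      · apply sSup_le
        intro N hN; exact (hcs hN).1
      · have hdir : DirectedOn (· ≤ ·) c := hchain.directedOn
        intro x hx y hy
        rw [Submodule.mem_sSup_of_directed hne hdir] at hx hy
        obtain ⟨N₁, hN₁c, hxN₁⟩ := hx
        obtain ⟨N₂, hN₂c, hyN₂⟩ := hy
        obtain ⟨N, hNc, h₁, h₂⟩ := hdir N₁ hN₁c N₂ hN₂c
        exact (hcs hNc).2 x (h₁ hxN₁) y (h₂ hyN₂)
  refine ⟨A, hAmax.1.1, hAmax.1.2, ?_⟩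
  intro x hxM hxcomm
  have hsup : A ⊔ Submodule.span ℝ {x} ∈ s := by
    constructor
    · exact sup_le hAmax.1.1 ((Submodule.span_singleton_le_iff_mem x M).mpr hxM)
    · intro u hu v hv
      rw [Submodule.mem_sup] at hu hv
      obtain ⟨a, ha, u', hu', rfl⟩ := hu
      obtain ⟨b, hb, v', hv', rfl⟩ := hv
      rw [Submodule.mem_span_singleton] at hu' hv'
      obtain ⟨r, rfl⟩ := hu'
      obtain ⟨t, rfl⟩ := hv'
      have hab : ⁅a, b⁆ = (0 : 𝔨) := hAmax.1.2 a ha b hb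
      have hxa : ⁅x, a⁆ = (0 : 𝔨) := hxcomm a ha
      have hxb : ⁅x, b⁆ = (0 : 𝔨) := hxcomm b hb
      have hax : ⁅a, x⁆ = (0 : 𝔨) := by rw [← lie_skew, hxa, neg_zero]
      simp [lie_add, add_lie, lie_smul, smul_lie, hab, hxb, hax, lie_self]
  have hle : A ⊔ Submodule.span ℝ {x} ≤ A := hAmax.2 hsup le_sup_left
  exact hle (Submodule.mem_sup_right (Submodule.mem_span_singleton_self x))

/-- Let `𝔨` be the Lie algebra of a compact Lie group, i.e. a finite-dimensional real Lie
algebra admitting an invariant inner product `B`, and let `τ` be an involutive Lie algebra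
automorphism of `𝔨`. Then there is a maximal abelian subalgebra `𝔱 ⊆ 𝔨` that is
`τ`-stable. -/
theorem exists_tau_stable_maximal_abelian
    {𝔨 : Type*} [LieRing 𝔨] [LieAlgebra ℝ 𝔨] [Module.Finite ℝ 𝔨]
    (B : 𝔨 →ₗ[ℝ] 𝔨 →ₗ[ℝ] ℝ)
    (hBsymm : ∀ x y, B x y = B y x)
    (hBpos : ∀ x, x ≠ 0 → 0 < B x x)
    (hBinv : ∀ x y z : 𝔨, B ⁅x, y⁆ z + B y ⁅x, z⁆ = 0)
    (τ : 𝔨 →ₗ⁅ℝ⁆ 𝔨) (hτ2 : ∀ x, τ (τ x) = x) :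
    ∃ 𝔱 : LieSubalgebra ℝ 𝔨,
      (∀ x ∈ 𝔱, ∀ y ∈ 𝔱, ⁅x, y⁆ = 0) ∧
      (∀ 𝔥 : LieSubalgebra ℝ 𝔨, (∀ x ∈ 𝔥, ∀ y ∈ 𝔥, ⁅x, y⁆ = 0) → 𝔱 ≤ 𝔥 → 𝔥 = 𝔱) ∧
      (∀ x ∈ 𝔱, τ x ∈ 𝔱) := by
  classical
  -- the (+1)-eigenspace of τ
  set Mp : Submodule ℝ 𝔨 := LinearMap.ker ((τ : 𝔨 →ₗ[ℝ] 𝔨) - LinearMap.id) with hMp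
  have hMp_mem : ∀ x : 𝔨, x ∈ Mp ↔ τ x = x := by
    intro x
    simp [hMp, LinearMap.mem_ker, sub_eq_zero]
  -- the (−1)-eigenspace of τ
  set Mm : Submodule ℝ 𝔨 := LinearMap.ker ((τ : 𝔨 →ₗ[ℝ] 𝔨) + LinearMap.id) with hMm
  have hMm_mem : ∀ x : 𝔨, x ∈ Mm ↔ τ x = -x := by
    intro x
    simp only [hMm, LinearMap.mem_ker, LinearMap.add_apply, LinearMap.id_coe, id_eq,
      LieHom.coe_toLinearMap, add_eq_zero_iff_eq_neg]
  -- a maximal commuting submodule `A` inside `Mp`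
  obtain ⟨A, hAle, hAcomm, hAmax⟩ := exists_max_comm Mp
  -- centralizer of A as a submodule
  set C : Submodule ℝ 𝔨 :=
    { carrier := {x | ∀ a ∈ A, ⁅x, a⁆ = (0 : 𝔨)}
      add_mem' := by intro x y hx hy a ha; rw [add_lie, hx a ha, hy a ha, add_zero]
      zero_mem' := by intro a _; rw [zero_lie]
      smul_mem' := by intro r x hx a ha; rw [smul_lie, hx a ha, smul_zero] } with hC
  have hC_mem : ∀ x : 𝔨, x ∈ C ↔ ∀ a ∈ A, ⁅x, a⁆ = (0 : 𝔨) := fun x => Iff.rfl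
  -- a maximal commuting submodule `Bm` inside `Mm ⊓ C`
  obtain ⟨Bm, hBle, hBcomm, hBmax⟩ := exists_max_comm (Mm ⊓ C)
  -- elements of A are fixed by τ, elements of Bm are negated
  have hτA : ∀ a ∈ A, τ a = a := fun a ha => (hMp_mem a).mp (hAle ha)
  have hτB : ∀ b ∈ Bm, τ b = -b := fun b hb => (hMm_mem b).mp (hBle hb).1
  have hBC : ∀ b ∈ Bm, ∀ a ∈ A, ⁅b, a⁆ = (0 : 𝔨) := fun b hb => (hBle hb).2
  set T : Submodule ℝ 𝔨 := A ⊔ Bm with hT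
  -- T is abelian
  have hTcomm : ∀ x ∈ T, ∀ y ∈ T, ⁅x, y⁆ = (0 : 𝔨) := by
    intro x hx y hy
    rw [hT, Submodule.mem_sup] at hx hy
    obtain ⟨a, ha, b, hb, rfl⟩ := hx
    obtain ⟨a', ha', b', hb', rfl⟩ := hy
    have h1 : ⁅a, a'⁆ = (0 : 𝔨) := hAcomm a ha a' ha'
    have h2 : ⁅b, a'⁆ = (0 : 𝔨) := hBC b hb a' ha'
    have h3 : ⁅a, b'⁆ = (0 : 𝔨) := by rw [← lie_skew, hBC b' hb' a ha, neg_zero]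
    have h4 : ⁅b, b'⁆ = (0 : 𝔨) := hBcomm b hb b' hb'
    rw [add_lie, lie_add, lie_add, h1, h2, h3, h4]
    simp
  -- T is τ-stable
  have hτT : ∀ x ∈ T, τ x ∈ T := by
    intro x hx
    rw [hT, Submodule.mem_sup] at hx ⊢
    obtain ⟨a, ha, b, hb, rfl⟩ := hx
    refine ⟨a, ha, -b, Bm.neg_mem hb, ?_⟩
    rw [map_add τ, hτA a ha, hτB b hb]
  -- T as a Lie subalgebra
  set 𝔱 : LieSubalgebra ℝ 𝔨 :=
    { T with
      lie_mem' := by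
        intro x y hx hy
        show ⁅x, y⁆ ∈ T
        rw [hTcomm x hx y hy]
        exact T.zero_mem } with h𝔱
  have h𝔱mem : ∀ x : 𝔨, x ∈ 𝔱 ↔ x ∈ T := fun x => Iff.rfl
  refine ⟨𝔱, ?_, ?_, ?_⟩
  · intro x hx y hy
    exact hTcomm x ((h𝔱mem x).mp hx) y ((h𝔱mem y).mp hy)
  · -- maximality
    intro 𝔥 h𝔥comm h𝔥le
    apply le_antisymm _ h𝔥le
    intro x hx
    rw [h𝔱mem, hT, Submodule.mem_sup]
    set xp : 𝔨 := (1/2 : ℝ) • (x + τ x) with hxp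
    set xm : 𝔨 := (1/2 : ℝ) • (x - τ x) with hxm
    -- x commutes with every element of T, and so does τ x
    have hxT : ∀ t ∈ T, ⁅x, t⁆ = (0 : 𝔨) := by
      intro t ht
      exact h𝔥comm x hx t (h𝔥le ((h𝔱mem t).mpr ht))
    have hτxT : ∀ t ∈ T, ⁅τ x, t⁆ = (0 : 𝔨) := by
      intro t ht
      have ht' : τ t ∈ T := hτT t ht
      have : ⁅τ x, τ (τ t)⁆ = (0 : 𝔨) := by
        rw [← τ.map_lie, hxT (τ t) ht', map_zero τ]
      rwa [hτ2 t] at this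
    have hAT : ∀ a ∈ A, a ∈ T := fun a ha => Submodule.mem_sup_left ha
    have hBT : ∀ b ∈ Bm, b ∈ T := fun b hb => Submodule.mem_sup_right hb
    -- xp lies in A
    have hxpA : xp ∈ A := by
      apply hAmax
      · rw [hMp_mem, hxp, map_smul τ, map_add τ, hτ2, add_comm]
      · intro a ha
        rw [hxp, smul_lie, add_lie, hxT a (hAT a ha), hτxT a (hAT a ha), add_zero, smul_zero]
    -- xm lies in Bm
    have hxmB : xm ∈ Bm := by
      apply hBmax
      · rw [Submodule.mem_inf]
        constructor
        · rw [hMm_mem, hxm, map_smul τ]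
          rw [show τ (x - τ x) = τ x - x by rw [map_sub τ, hτ2]]
          rw [← smul_neg, neg_sub]
        · rw [hC_mem]
          intro a ha
          rw [hxm, smul_lie, sub_lie, hxT a (hAT a ha), hτxT a (hAT a ha), sub_zero, smul_zero]
      · intro b hb
        rw [hxm, smul_lie, sub_lie, hxT b (hBT b hb), hτxT b (hBT b hb), sub_zero, smul_zero]
    refine ⟨xp, hxpA, xm, hxmB, ?_⟩
    rw [hxp, hxm]
    module
  · -- τ-stability
    intro x hx
    exact (h𝔱mem _).mpr (hτT x ((h𝔱mem x).mp hx))
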